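/- The language of words over the alphabet {a,b,c} that contain as many a's as b's, as many a's as c's, and every prefix of which contains no more b's than a's and no more c's than a's, is not a context-free language. -/

import Mathlib

/-- The language over the alphabet {a,b,c} (encoded as `Fin 3`, with `a = 0`, `b = 1`,
`c = 2`) of words with as many a's as b's, as many a's as c's, and every prefix of which
contains no more b's than a's and no more c's than a's. -/
def krewerasLanguage : Language (Fin 3) :=
  {w | w.count 1 = w.count 0 ∧ w.count 2 = w.count 0 ∧
    ∀ u : List (Fin 3), u <+: w → u.count 1 ≤ u.count 0 ∧ u.count 2 ≤ u.count 0}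


namespace KrewerasAux

open ContextFreeGrammar Symbol

universe uT uN
variable {T : Type uT} {N : Type uN}

/-- Parse trees. -/
inductive PT (T : Type uT) (N : Type uN) where
  | leaf (t : T)
  | node (r : ContextFreeRule T N) (c : List (PT T N))

namespace PT

def root : PT T N → Symbol T N
  | leaf t => .terminal t
  | node r _ => .nonterminal r.input

mutual
def word : PT T N → List T
  | leaf t => [t]
  | node _ c => words c
def words : List (PT T N) → List T
  | [] => []
  | t :: ts => word t ++ words ts
end

mutual
def size : PT T N → ℕ
  | leaf _ => 1
  | node _ c => 1 + sizes c
def sizes : List (PT T N) → ℕ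
  | [] => 0
  | t :: ts => size t + sizes ts
end

mutual
def nts : PT T N → List N
  | leaf _ => []
  | node r c => r.input :: ntsF c
def ntsF : List (PT T N) → List N
  | [] => []
  | t :: ts => nts t ++ ntsF ts
end

variable {g : ContextFreeGrammar.{uT} T}

mutual
def valid (g : ContextFreeGrammar.{uT} T) : PT T g.NT → Prop
  | leaf _ => True
  | node r c => r ∈ g.rules ∧ c.map root = r.output ∧ validF g c
def validF (g : ContextFreeGrammar.{uT} T) : List (PT T g.NT) → Prop
  | [] => True
  | t :: ts => valid g t ∧ validF g ts
end

mutual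
def prf : PT T N → Prop
  | leaf _ => True
  | node r c => r.input ∉ ntsF c ∧ prfF c
def prfF : List (PT T N) → Prop
  | [] => True
  | t :: ts => prf t ∧ prfF ts
end

@[simp] lemma words_nil : words ([] : List (PT T N)) = [] := rfl
@[simp] lemma words_cons (t : PT T N) (ts : List (PT T N)) :
    words (t :: ts) = word t ++ words ts := rfl
@[simp] lemma words_append (a b : List (PT T N)) :
    words (a ++ b) = words a ++ words b := by
  induction a with
  | nil => simp
  | cons t ts ih => simp [ih]

@[simp] lemma sizes_nil : sizes ([] : List (PT T N)) = 0 := rfl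
@[simp] lemma sizes_cons (t : PT T N) (ts : List (PT T N)) :
    sizes (t :: ts) = size t + sizes ts := rfl
@[simp] lemma sizes_append (a b : List (PT T N)) :
    sizes (a ++ b) = sizes a + sizes b := by
  induction a with
  | nil => simp
  | cons t ts ih => simp [ih]; omega

@[simp] lemma ntsF_nil : ntsF ([] : List (PT T N)) = [] := rfl
@[simp] lemma ntsF_cons (t : PT T N) (ts : List (PT T N)) :
    ntsF (t :: ts) = nts t ++ ntsF ts := rfl
@[simp] lemma ntsF_append (a b : List (PT T N)) :
    ntsF (a ++ b) = ntsF a ++ ntsF b := by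
  induction a with
  | nil => simp
  | cons t ts ih => simp [ih]

@[simp] lemma validF_nil : validF g [] := trivial
@[simp] lemma validF_cons {t : PT T g.NT} {ts : List (PT T g.NT)} :
    validF g (t :: ts) ↔ valid g t ∧ validF g ts := Iff.rfl
@[simp] lemma validF_append {a b : List (PT T g.NT)} :
    validF g (a ++ b) ↔ validF g a ∧ validF g b := by
  induction a with
  | nil => simp [validF]
  | cons t ts ih => simp [validF, ih]; tauto

@[simp] lemma prfF_cons {t : PT T N} {ts : List (PT T N)} :
    prfF (t :: ts) ↔ prf t ∧ prfF ts := Iff.rfl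

end PT

end KrewerasAux

namespace KrewerasAux
namespace PT
open ContextFreeGrammar Symbol
universe uT uN
variable {T : Type uT} {g : ContextFreeGrammar.{uT} T}

mutual
theorem derives (t : PT T g.NT) (h : valid g t) :
    g.Derives [t.root] ((t.word).map Symbol.terminal) :=
  match t, h with
  | leaf t, _ => by simp only [root, word, List.map_cons, List.map_nil]; rfl
  | node r c, ⟨hr, hroots, hc⟩ => by
      have h1 : g.Produces [Symbol.nonterminal r.input] r.output :=
        ⟨r, hr, ContextFreeRule.Rewrites.input_output⟩
      have h2 := derivesF c hc
      rw [hroots] at h2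
      exact (h1.trans_derives (by simpa [root, word] using h2))
theorem derivesF (c : List (PT T g.NT)) (h : validF g c) :
    g.Derives (c.map root) ((words c).map Symbol.terminal) :=
  match c, h with
  | [], _ => by simp only [words_nil, List.map_nil]; rfl
  | t :: ts, ⟨ht, hts⟩ => by
      have h1 := (derives t ht).append_right (ts.map root)
      have h2 := (derivesF ts hts).append_left ((t.word).map Symbol.terminal)
      simpa using h1.trans h2
end

theorem exists_forest {α : List (Symbol T g.NT)} {w : List T}
    (h : g.Derives α (w.map Symbol.terminal)) :
    ∃ c : List (PT T g.NT), validF g c ∧ c.map root = α ∧ words c = w := by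
  induction h using Relation.ReflTransGen.head_induction_on with
  | refl =>
      refine ⟨w.map leaf, ?_, ?_, ?_⟩
      · induction w with
        | nil => simp
        | cons a l ih => exact ⟨trivial, ih⟩
      · simp [root]
      · induction w with
        | nil => simp
        | cons a l ih => simp [word, ih]
  | head hstep _ ih =>
      obtain ⟨c, hc, hroots, hw⟩ := ih
      obtain ⟨r, hr, hrw⟩ := hstep
      obtain ⟨p, q, h1, h2⟩ := hrw.exists_parts
      subst h1 h2
      rw [List.map_eq_append_iff] at hroots
      obtain ⟨c1', c2, hc12, hp', hq⟩ := hroots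
      rw [List.map_eq_append_iff] at hp'
      obtain ⟨c1, cm, hcm2, hp, hm⟩ := hp'
      subst hc12 hcm2
      refine ⟨c1 ++ [node r cm] ++ c2, ?_, ?_, ?_⟩
      · simp at hc ⊢
        exact ⟨hc.1, ⟨hr, hm, hc.2.1⟩, hc.2.2⟩
      · simp [root, hp, hq]
      · simp [word, ← hw]
end PT
end KrewerasAux

namespace KrewerasAux
namespace PT
open ContextFreeGrammar Symbol
universe uT uN
variable {T : Type uT} {g : ContextFreeGrammar.{uT} T}

/-- `i` copies of `l`. -/
def rep (l : List T) (i : ℕ) : List T := (List.replicate i l).flatten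

@[simp] lemma rep_zero (l : List T) : rep l 0 = [] := rfl
@[simp] lemma rep_succ (l : List T) (i : ℕ) : rep l (i + 1) = l ++ rep l i := rfl
@[simp] lemma rep_one (l : List T) : rep l 1 = l := by simp
lemma count_rep [BEq T] (a : T) (l : List T) (i : ℕ) :
    (rep l i).count a = i * l.count a := by
  induction i with
  | zero => simp
  | succ n ih => simp [List.count_append, ih]; ring

theorem lift_middle {c1 c2 : List (PT T g.NT)} (h1 : validF g c1) (h2 : validF g c2)
    {α β : List (Symbol T g.NT)} (h : g.Derives α β) :
    g.Derives (c1.map root ++ α ++ c2.map root)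
      ((words c1).map Symbol.terminal ++ β ++ (words c2).map Symbol.terminal) := by
  have a1 := (derivesF c1 h1).append_right (α ++ c2.map root)
  have a2 := ((h.append_right (c2.map root)).append_left ((words c1).map Symbol.terminal))
  have a3 := ((derivesF c2 h2).append_left ((words c1).map Symbol.terminal ++ β))
  simp only [List.append_assoc] at *
  exact a1.trans (a2.trans a3)

theorem pump_derives {B : g.NT} {v y : List T}
    (h : g.Derives [Symbol.nonterminal B]
      (v.map Symbol.terminal ++ [Symbol.nonterminal B] ++ y.map Symbol.terminal)) (i : ℕ) :
    g.Derives [Symbol.nonterminal B]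
      ((rep v i).map Symbol.terminal ++ [Symbol.nonterminal B] ++ (rep y i).map Symbol.terminal) := by
  induction i with
  | zero => simpa using Relation.ReflTransGen.refl
  | succ n ih =>
      have e : rep y (n+1) = rep y n ++ y := by
        simp [rep, List.replicate_succ']
      rw [rep_succ, e]
      refine h.trans ?_
      have := (ih.append_left (v.map Symbol.terminal)).append_right (y.map Symbol.terminal)
      simpa [List.append_assoc] using this

mutual
theorem extract_nt (t : PT T g.NT) (h : valid g t) {B : g.NT} (hB : B ∈ nts t) :
    ∃ (v x y : List T) (s : PT T g.NT), word t = v ++ x ++ y ∧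
      g.Derives [t.root] (v.map Symbol.terminal ++ [Symbol.nonterminal B] ++ y.map Symbol.terminal) ∧
      valid g s ∧ s.root = Symbol.nonterminal B ∧ s.word = x ∧ s.size ≤ t.size :=
  match t, h with
  | node r c, ⟨hr, hroots, hc⟩ => by
      rcases List.mem_cons.mp (show B ∈ r.input :: ntsF c from hB) with hBr | hBc
      · exact ⟨[], word (node r c), [], node r c, by simp, by subst hBr; simpa [root] using Relation.ReflTransGen.refl, ⟨hr, hroots, hc⟩,
          by subst hBr; simp [root], rfl, le_rfl⟩
      · obtain ⟨v, x, y, s, hw, hd, hs1, hs2, hs3, hs4⟩ := extract_ntF c hc hBc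
        refine ⟨v, x, y, s, hw, ?_, hs1, hs2, hs3, ?_⟩
        · have h1 : g.Produces [Symbol.nonterminal r.input] (c.map root) := by
            rw [hroots]; exact ⟨r, hr, ContextFreeRule.Rewrites.input_output⟩
          exact h1.trans_derives hd
        · simp only [size]; omega
theorem extract_ntF (c : List (PT T g.NT)) (h : validF g c) {B : g.NT} (hB : B ∈ ntsF c) :
    ∃ (v x y : List T) (s : PT T g.NT), words c = v ++ x ++ y ∧
      g.Derives (c.map root) (v.map Symbol.terminal ++ [Symbol.nonterminal B] ++ y.map Symbol.terminal) ∧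
      valid g s ∧ s.root = Symbol.nonterminal B ∧ s.word = x ∧ s.size ≤ sizes c :=
  match c, h with
  | t :: ts, ⟨ht, hts⟩ => by
      rcases List.mem_append.mp (show B ∈ nts t ++ ntsF ts from hB) with hBt | hBts
      · obtain ⟨v, x, y, s, hw, hd, hs1, hs2, hs3, hs4⟩ := extract_nt t ht hBt
        refine ⟨v, x, y ++ words ts, s, by simp [hw], ?_, hs1, hs2, hs3, by simp; omega⟩
        have := lift_middle (c1 := []) (c2 := ts) trivial hts hd
        simpa [List.append_assoc] using this
      · obtain ⟨v, x, y, s, hw, hd, hs1, hs2, hs3, hs4⟩ := extract_ntF ts hts hBts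
        refine ⟨word t ++ v, x, y, s, by simp [hw], ?_, hs1, hs2, hs3, by simp; omega⟩
        have := lift_middle (c1 := [t]) (c2 := []) ⟨ht, trivial⟩ trivial hd
        simpa [List.append_assoc, word] using this
end

end PT
end KrewerasAux

namespace KrewerasAux
namespace PT
open ContextFreeGrammar Symbol
universe uT uN
variable {T : Type uT} {g : ContextFreeGrammar.{uT} T}

mutual
theorem extract_repeat (t : PT T g.NT) (h : valid g t) (hp : ¬ prf t) :
    ∃ (B : g.NT) (u v x y z : List T), word t = u ++ v ++ x ++ y ++ z ∧
      g.Derives [t.root] (u.map Symbol.terminal ++ [Symbol.nonterminal B] ++ z.map Symbol.terminal) ∧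
      g.Derives [Symbol.nonterminal B]
        (v.map Symbol.terminal ++ [Symbol.nonterminal B] ++ y.map Symbol.terminal) ∧
      g.Derives [Symbol.nonterminal B] (x.map Symbol.terminal) ∧
      (v ++ y = [] → ∃ t' : PT T g.NT, valid g t' ∧ t'.root = t.root ∧ t'.word = word t ∧
        t'.size < t.size) :=
  match t, h with
  | leaf a, _ => absurd (trivial : prf (leaf a)) hp
  | node r c, ⟨hr, hroots, hc⟩ => by
      by_cases hin : r.input ∈ ntsF c
      · obtain ⟨v, x, y, s, hw, hd, hs1, hs2, hs3, hs4⟩ := extract_ntF c hc hin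
        have hone : g.Produces [Symbol.nonterminal r.input] (c.map root) := by
          rw [hroots]; exact ⟨r, hr, ContextFreeRule.Rewrites.input_output⟩
        refine ⟨r.input, [], v, x, y, [], by simpa [word] using hw, ?_, ?_, ?_, ?_⟩
        · simpa [root] using (Relation.ReflTransGen.refl : g.Derives _ _)
        · exact hone.trans_derives hd
        · rw [← hs3, ← hs2]; exact derives s hs1
        · intro hvy
          rcases List.append_eq_nil_iff.mp hvy with ⟨hv, hy⟩
          refine ⟨s, hs1, by rw [hs2]; rfl, ?_, ?_⟩
          · simp [word, hw, hv, hy, hs3]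
          · simp only [size]; omega
      · have hpf : ¬ prfF c := fun hpc => hp ⟨hin, hpc⟩
        obtain ⟨B, u, v, x, y, z, hw, hd1, hd2, hd3, hsm⟩ := extract_repeatF c hc hpf
        have hone : g.Produces [Symbol.nonterminal r.input] (c.map root) := by
          rw [hroots]; exact ⟨r, hr, ContextFreeRule.Rewrites.input_output⟩
        refine ⟨B, u, v, x, y, z, by simpa [word] using hw, hone.trans_derives hd1, hd2, hd3, ?_⟩
        intro hvy
        obtain ⟨c', hc', hroots', hw', hs'⟩ := hsm hvy
        refine ⟨node r c', ⟨hr, hroots' ▸ hroots, hc'⟩, by simp [root], by simpa [word] using hw', ?_⟩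
        simp only [size]; omega
theorem extract_repeatF (c : List (PT T g.NT)) (h : validF g c) (hp : ¬ prfF c) :
    ∃ (B : g.NT) (u v x y z : List T), words c = u ++ v ++ x ++ y ++ z ∧
      g.Derives (c.map root) (u.map Symbol.terminal ++ [Symbol.nonterminal B] ++ z.map Symbol.terminal) ∧
      g.Derives [Symbol.nonterminal B]
        (v.map Symbol.terminal ++ [Symbol.nonterminal B] ++ y.map Symbol.terminal) ∧
      g.Derives [Symbol.nonterminal B] (x.map Symbol.terminal) ∧
      (v ++ y = [] → ∃ c' : List (PT T g.NT), validF g c' ∧ c'.map root = c.map root ∧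
        words c' = words c ∧ sizes c' < sizes c) :=
  match c, h with
  | [], _ => absurd (trivial : prfF ([] : List (PT T g.NT))) hp
  | t :: ts, ⟨ht, hts⟩ => by
      by_cases hpt : prf t
      · have hpts : ¬ prfF ts := fun hh => hp ⟨hpt, hh⟩
        obtain ⟨B, u, v, x, y, z, hw, hd1, hd2, hd3, hsm⟩ := extract_repeatF ts hts hpts
        refine ⟨B, word t ++ u, v, x, y, z, by simp [hw], ?_, hd2, hd3, ?_⟩
        · have := lift_middle (c1 := [t]) (c2 := []) ⟨ht, trivial⟩ trivial hd1
          simpa [List.append_assoc, word] using this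
        · intro hvy
          obtain ⟨c', h1, h2, h3, h4⟩ := hsm hvy
          exact ⟨t :: c', ⟨ht, h1⟩, by simp [h2], by simp [h3], by simp; omega⟩
      · obtain ⟨B, u, v, x, y, z, hw, hd1, hd2, hd3, hsm⟩ := extract_repeat t ht hpt
        refine ⟨B, u, v, x, y, z ++ words ts, by simp [hw], ?_, hd2, hd3, ?_⟩
        · have := lift_middle (c1 := []) (c2 := ts) trivial hts hd1
          simpa [List.append_assoc] using this
        · intro hvy
          obtain ⟨t', h1, h2, h3, h4⟩ := hsm hvy
          exact ⟨t' :: ts, ⟨h1, hts⟩, by simp [h2], by simp [h3], by simp; omega⟩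
end

end PT
end KrewerasAux

namespace KrewerasAux
namespace PT
open ContextFreeGrammar Symbol
universe uT uN
variable {T : Type uT} {g : ContextFreeGrammar.{uT} T}

noncomputable def Kc (g : ContextFreeGrammar.{uT} T) : ℕ :=
  max (g.rules.sup fun r => r.output.length) 1

lemma one_le_Kc : 1 ≤ Kc g := le_max_right _ _

lemma output_le_Kc {r : ContextFreeRule T g.NT} (hr : r ∈ g.rules) :
    r.output.length ≤ Kc g :=
  le_trans (Finset.le_sup (f := fun r => r.output.length) hr) (le_max_left _ _)

noncomputable def allNT (g : ContextFreeGrammar.{uT} T) : Finset g.NT :=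
  letI := Classical.decEq g.NT
  g.rules.image ContextFreeRule.input

mutual
theorem nts_allNT (t : PT T g.NT) (h : valid g t) : ∀ B ∈ nts t, B ∈ allNT g :=
  match t, h with
  | leaf _, _ => by intro B hB; simp [nts] at hB
  | node r c, ⟨hr, hroots, hc⟩ => by
      intro B hB
      rcases List.mem_cons.mp (show B ∈ r.input :: ntsF c from hB) with hB | hB
      · subst hB
        letI := Classical.decEq g.NT
        exact Finset.mem_image.mpr ⟨r, hr, rfl⟩
      · exact nts_allNTF c hc B hB
theorem nts_allNTF (c : List (PT T g.NT)) (h : validF g c) : ∀ B ∈ ntsF c, B ∈ allNT g :=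
  match c, h with
  | [], _ => by intro B hB; simp at hB
  | t :: ts, ⟨ht, hts⟩ => by
      intro B hB
      rcases List.mem_append.mp (show B ∈ nts t ++ ntsF ts from hB) with hB | hB
      · exact nts_allNT t ht B hB
      · exact nts_allNTF ts hts B hB
end

mutual
theorem short_of_prf (t : PT T g.NT) (h : valid g t) (hp : prf t) (F : Finset g.NT)
    (hF : ∀ B ∈ nts t, B ∈ F) : (word t).length ≤ Kc g ^ F.card :=
  match t, h, hp with
  | leaf a, _, _ => by
      simpa [word] using Nat.one_le_pow _ _ (lt_of_lt_of_le one_pos one_le_Kc)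
  | node r c, ⟨hr, hroots, hc⟩, ⟨hni, hpc⟩ => by
      letI := Classical.decEq g.NT
      have hrF : r.input ∈ F := hF r.input (by simp [nts])
      have hsub : ∀ B ∈ ntsF c, B ∈ F.erase r.input := by
        intro B hB
        exact Finset.mem_erase.mpr ⟨fun he => hni (he ▸ hB), hF B (List.mem_cons_of_mem _ hB)⟩
      have h1 := short_of_prfF c hc hpc (F.erase r.input) hsub
      have h2 : c.length = r.output.length := by rw [← hroots, List.length_map]
      have h3 : (F.erase r.input).card = F.card - 1 := Finset.card_erase_of_mem hrF
      have h4 : 1 ≤ F.card := Finset.card_pos.mpr ⟨r.input, hrF⟩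
      calc (word (node r c)).length = (words c).length := rfl
        _ ≤ c.length * Kc g ^ (F.erase r.input).card := h1
        _ ≤ Kc g * Kc g ^ (F.card - 1) := by
            rw [h3]; exact Nat.mul_le_mul_right _ (h2 ▸ output_le_Kc hr)
        _ = Kc g ^ F.card := by
            rw [← pow_succ']
            congr 1
            omega
theorem short_of_prfF (c : List (PT T g.NT)) (h : validF g c) (hp : prfF c) (F : Finset g.NT)
    (hF : ∀ B ∈ ntsF c, B ∈ F) : (words c).length ≤ c.length * Kc g ^ F.card :=
  match c, h, hp with
  | [], _, _ => by simp
  | t :: ts, ⟨ht, hts⟩, ⟨hpt, hpts⟩ => by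
      have h1 := short_of_prf t ht hpt F (fun B hB => hF B (List.mem_append_left _ hB))
      have h2 := short_of_prfF ts hts hpts F (fun B hB => hF B (List.mem_append_right _ hB))
      simp only [words_cons, List.length_append, List.length_cons]
      calc (word t).length + (words ts).length ≤ Kc g ^ F.card + ts.length * Kc g ^ F.card :=
            Nat.add_le_add h1 h2
        _ = (ts.length + 1) * Kc g ^ F.card := by ring
end

lemma derives_middle {p q α β : List (Symbol T g.NT)} (h : g.Derives α β) :
    g.Derives (p ++ α ++ q) (p ++ β ++ q) := by
  have := (h.append_right q).append_left p
  simpa [List.append_assoc] using this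

lemma words_length_le {c : List (PT T g.NT)} {M : ℕ} (h : ∀ s ∈ c, (word s).length ≤ M) :
    (words c).length ≤ c.length * M := by
  induction c with
  | nil => simp
  | cons t ts ih =>
      have := ih (fun s hs => h s (List.mem_cons_of_mem _ hs))
      have ht := h t List.mem_cons_self
      simp only [words_cons, List.length_append, List.length_cons]
      calc (word t).length + (words ts).length ≤ M + ts.length * M := Nat.add_le_add ht this
        _ = (ts.length + 1) * M := by ring

lemma size_le_sizes {c : List (PT T g.NT)} {s : PT T g.NT} (hs : s ∈ c) : s.size ≤ sizes c := by
  induction c with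
  | nil => simp at hs
  | cons t ts ih =>
      rcases List.mem_cons.mp hs with h | h
      · subst h; simp only [sizes_cons]; omega
      · have := ih h; simp only [sizes_cons]; omega

theorem main_pump (n : ℕ) : ∀ t : PT T g.NT, t.size ≤ n → valid g t →
    Kc g ^ (allNT g).card < (word t).length →
    ∃ u v x y z : List T, word t = u ++ v ++ x ++ y ++ z ∧ v ++ y ≠ [] ∧
      (v ++ x ++ y).length ≤ Kc g ^ ((allNT g).card + 1) ∧
      ∀ i, g.Derives [t.root] ((u ++ rep v i ++ x ++ rep y i ++ z).map Symbol.terminal) := by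
  induction n using Nat.strong_induction_on with
  | _ n IH =>
    intro t hsize hval hlen
    match t, hval with
    | leaf a, _ =>
        exfalso
        have : (1:ℕ) ≤ Kc g ^ (allNT g).card := Nat.one_le_pow _ _ (lt_of_lt_of_le one_pos one_le_Kc)
        have h1 : (word (leaf a : PT T g.NT)).length = 1 := rfl
        omega
    | node r c, ⟨hr, hroots, hc⟩ =>
      have hone : g.Produces [Symbol.nonterminal r.input] (c.map root) := by
        rw [hroots]; exact ⟨r, hr, ContextFreeRule.Rewrites.input_output⟩
      by_cases hex : ∃ s ∈ c, Kc g ^ (allNT g).card < (word s).length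
      · obtain ⟨s, hsc, hslen⟩ := hex
        obtain ⟨c1, c2, rfl⟩ := List.append_of_mem hsc
        have hc1 : validF g c1 := (validF_append.mp hc).1
        have hsts : valid g s ∧ validF g c2 := (validF_append.mp hc).2
        have hssize : s.size < n := by
          have h1 : s.size ≤ sizes (c1 ++ s :: c2) := size_le_sizes hsc
          have h2 : size (node r (c1 ++ s :: c2)) = 1 + sizes (c1 ++ s :: c2) := rfl
          omega
        obtain ⟨u, v, x, y, z, hw, hvy, hb, hd⟩ := IH s.size hssize s le_rfl hsts.1 hslen
        refine ⟨words c1 ++ u, v, x, y, z ++ words c2, ?_, hvy, hb, ?_⟩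
        · show words (c1 ++ s :: c2) = _
          simp [hw]
        · intro i
          have hmid := lift_middle hc1 hsts.2 (hd i)
          have h2 := hone.trans_derives (by simpa [List.append_assoc] using hmid)
          show g.Derives [Symbol.nonterminal r.input] _
          simp only [List.map_append, List.append_assoc] at h2 ⊢
          exact h2
      · push_neg at hex
        have hshort : (word (node r c)).length ≤ Kc g ^ ((allNT g).card + 1) := by
          have h1 := words_length_le hex
          have h2 : c.length = r.output.length := by rw [← hroots, List.length_map]
          calc (word (node r c)).length = (words c).length := rfl
            _ ≤ c.length * Kc g ^ (allNT g).card := h1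
            _ ≤ Kc g * Kc g ^ (allNT g).card := Nat.mul_le_mul_right _ (h2 ▸ output_le_Kc hr)
            _ = Kc g ^ ((allNT g).card + 1) := (pow_succ' _ _).symm
        have hnprf : ¬ prf (node r c) := by
          intro hp
          have hv : valid g (node r c) := by exact ⟨hr, hroots, hc⟩
          have := short_of_prf _ hv hp (allNT g) (nts_allNT _ hv)
          omega
        have hv : valid g (node r c) := by exact ⟨hr, hroots, hc⟩
        obtain ⟨B, u, v, x, y, z, hw, hd1, hd2, hd3, hsm⟩ :=
          extract_repeat _ hv hnprf
        by_cases hvy : v ++ y = []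
        · obtain ⟨t', h1, h2, h3, h4⟩ := hsm hvy
          have ht'size : t'.size < n := by
            have : size (node r c) ≤ n := hsize
            omega
          obtain ⟨u', v', x', y', z', hw', hvy', hb', hd'⟩ :=
            IH t'.size ht'size t' le_rfl h1 (by rw [h3]; exact hlen)
          exact ⟨u', v', x', y', z', by rw [← h3]; exact hw', hvy', hb',
            fun i => by rw [← h2]; exact hd' i⟩
        · refine ⟨u, v, x, y, z, hw, hvy, ?_, ?_⟩
          · have : (word (node r c)).length = (u ++ v ++ x ++ y ++ z).length := by rw [hw]
            simp only [List.length_append] at this ⊢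
            omega
          · intro i
            have step1 : g.Derives [Symbol.nonterminal B]
                ((rep v i).map Symbol.terminal ++ x.map Symbol.terminal ++ (rep y i).map Symbol.terminal) :=
              (pump_derives hd2 i).trans (derives_middle hd3)
            have step2 := hd1.trans (derives_middle step1)
            show g.Derives [root (node r c)] _
            have hroot : root (node r c) = Symbol.nonterminal r.input := rfl
            simp only [List.map_append, List.append_assoc] at step2 ⊢
            exact step2
end PT
end KrewerasAux

namespace KrewerasAux
namespace PT
open ContextFreeGrammar Symbol
universe uT uN
variable {T : Type uT} {g : ContextFreeGrammar.{uT} T}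

theorem cfg_pumping {w : List T} (hw : w ∈ g.language)
    (hlen : Kc g ^ (allNT g).card < w.length) :
    ∃ u v x y z : List T, w = u ++ v ++ x ++ y ++ z ∧ v ++ y ≠ [] ∧
      (v ++ x ++ y).length ≤ Kc g ^ ((allNT g).card + 1) ∧
      ∀ i, (u ++ rep v i ++ x ++ rep y i ++ z) ∈ g.language := by
  rw [mem_language_iff] at hw
  obtain ⟨c, hc, hroots, hwords⟩ := exists_forest hw
  rcases c with _ | ⟨t, ts⟩
  · simp at hroots
  · rcases ts with _ | ⟨t2, ts⟩
    swap
    · simp at hroots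
    have hroott : t.root = Symbol.nonterminal g.initial := by simpa using hroots
    have hwt : word t = w := by simpa [word] using hwords
    have hvalt : valid g t := hc.1
    obtain ⟨u, v, x, y, z, hw', hvy, hb, hd⟩ :=
      main_pump t.size t le_rfl hvalt (by rw [hwt]; exact hlen)
    refine ⟨u, v, x, y, z, by rw [← hwt]; exact hw', hvy, hb, fun i => ?_⟩
    rw [mem_language_iff]
    have := hd i
    rwa [hroott] at this
end PT
end KrewerasAux

namespace KrewerasAux
open KrewerasAux.PT

/-- The witness word `a^p b^p c^p`. -/
def wd (p : ℕ) : List (Fin 3) :=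
  List.replicate p 0 ++ List.replicate p 1 ++ List.replicate p 2

lemma count_fin3 (l : List (Fin 3)) : l.count 0 + l.count 1 + l.count 2 = l.length := by
  induction l with
  | nil => simp
  | cons a l ih =>
      fin_cases a <;> simp [List.count_cons] <;> omega

@[simp] lemma count_wd_0 (p : ℕ) : (wd p).count 0 = p := by
  simp [wd, List.count_append, List.count_replicate]
@[simp] lemma count_wd_1 (p : ℕ) : (wd p).count 1 = p := by
  simp [wd, List.count_append, List.count_replicate]
@[simp] lemma count_wd_2 (p : ℕ) : (wd p).count 2 = p := by
  simp [wd, List.count_append, List.count_replicate]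
@[simp] lemma length_wd (p : ℕ) : (wd p).length = 3 * p := by
  simp [wd]; omega

lemma take_wd (p n : ℕ) : (wd p).take n =
    List.replicate (min n p) (0 : Fin 3) ++ List.replicate (min (n - p) p) 1 ++
      List.replicate (min (n - p - p) p) 2 := by
  simp [wd, List.take_append, List.take_replicate, List.length_replicate]

lemma wd_mem (p : ℕ) : wd p ∈ krewerasLanguage := by
  refine ⟨by simp, by simp, fun u hu => ?_⟩
  rw [List.prefix_iff_eq_take.mp hu, take_wd]
  simp [List.count_append, List.count_replicate]
  omega

lemma no02 {p : ℕ} {u m z : List (Fin 3)} (h : u ++ m ++ z = wd p) (hm : m.length ≤ p)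
    (h0 : 0 < m.count 0) (h2 : 0 < m.count 2) : False := by
  have hpre : u ++ m <+: wd p := ⟨z, by simpa [List.append_assoc] using h⟩
  have hApre : List.replicate p (0 : Fin 3) ++ List.replicate p 1 <+: wd p :=
    ⟨List.replicate p 2, by simp [wd]⟩
  -- step 1 : |u| + |m| > 2p
  have hstep1 : 2 * p < u.length + m.length := by
    by_contra hle
    push_neg at hle
    have h1 : u ++ m <+: List.replicate p (0 : Fin 3) ++ List.replicate p 1 :=
      List.prefix_of_prefix_length_le hpre hApre (by simp; omega)
    have h2' : (u ++ m).count 2 ≤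
        (List.replicate p (0 : Fin 3) ++ List.replicate p 1).count 2 :=
      h1.sublist.count_le _
    simp [List.count_append, List.count_replicate] at h2'
    omega
  -- step 2 : m ++ z lives in the b/c part, so no 0 in it
  have hup : p ≤ u.length := by omega
  have hdrop : m ++ z = (wd p).drop u.length := by
    rw [← h, List.append_assoc, List.drop_left]
  have : (m ++ z).count 0 = 0 := by
    rw [hdrop]
    have e : u.length = (List.replicate p (0 : Fin 3)).length + (u.length - p) := by
      simp; omega
    have : (wd p).drop u.length =
        (List.replicate p (1 : Fin 3) ++ List.replicate p 2).drop (u.length - p) := by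
      rw [wd, List.append_assoc, e, List.drop_append, List.drop_eq_nil_of_le (by simp), List.nil_append]
      congr 1
      simp only [List.length_replicate]
    rw [this]
    have hsub := (List.drop_sublist (u.length - p)
      (List.replicate p (1 : Fin 3) ++ List.replicate p 2)).count_le (0 : Fin 3)
    simp [List.count_append, List.count_replicate] at hsub
    omega
  simp [List.count_append] at this
  omega

end KrewerasAux

theorem krewerasLanguage_not_contextFree' : ¬ krewerasLanguage.IsContextFree := by
  rintro ⟨g, hg⟩
  classical
  set m := (KrewerasAux.PT.allNT g).card with hm
  set K := KrewerasAux.PT.Kc g with hK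
  set p := K ^ (m + 1) with hp
  have hK1 : 1 ≤ K := KrewerasAux.PT.one_le_Kc
  have hKm : 1 ≤ K ^ m := Nat.one_le_pow _ _ (by omega)
  have hKp : K ^ m ≤ p := by
    rw [hp]
    exact Nat.pow_le_pow_right hK1 (by omega)
  have hpmem : KrewerasAux.wd p ∈ g.language := by rw [hg]; exact KrewerasAux.wd_mem p
  have hlen : K ^ m < (KrewerasAux.wd p).length := by
    rw [KrewerasAux.length_wd]; omega
  obtain ⟨u, v, x, y, z, hw, hvy, hb, hpump⟩ := KrewerasAux.PT.cfg_pumping hpmem hlen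
  -- count bookkeeping
  have hcount : ∀ i : ℕ, ∀ a : Fin 3,
      (u ++ KrewerasAux.PT.rep v i ++ x ++ KrewerasAux.PT.rep y i ++ z).count a
        = (u.count a + x.count a + z.count a) + i * (v.count a + y.count a) := by
    intro i a
    simp [List.count_append, KrewerasAux.PT.count_rep]
    ring
  have hmem : ∀ i : ℕ,
      (u ++ KrewerasAux.PT.rep v i ++ x ++ KrewerasAux.PT.rep y i ++ z) ∈ krewerasLanguage := by
    intro i; rw [← hg]; exact hpump i
  have h0 := (hmem 0).1
  have h0' := (hmem 0).2.1
  have h1 := (hmem 1).1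
  have h1' := (hmem 1).2.1
  simp only [hcount] at h0 h0' h1 h1'
  -- the pumped part has equal counts of all three letters, and is nonempty
  have hlenvy : 1 ≤ (v ++ y).length :=
    List.length_pos_iff.mpr hvy
  have hsum := KrewerasAux.count_fin3 (v ++ y)
  simp only [List.count_append] at hsum
  have hd0 : 0 < v.count 0 + y.count 0 := by omega
  have hd2 : 0 < v.count 2 + y.count 2 := by omega
  -- contradiction with the infix structure
  have hmid : u ++ (v ++ x ++ y) ++ z = KrewerasAux.wd p := by
    rw [hw]; simp [List.append_assoc]
  have hmlen : (v ++ x ++ y).length ≤ p := hb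
  have hm0 : 0 < (v ++ x ++ y).count 0 := by
    simp only [List.count_append]; omega
  have hm2 : 0 < (v ++ x ++ y).count 2 := by
    simp only [List.count_append]; omega
  exact KrewerasAux.no02 hmid hmlen hm0 hm2


theorem krewerasLanguage_not_contextFree : ¬ krewerasLanguage.IsContextFree :=
  krewerasLanguage_not_contextFree'
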